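/- Let (L,p), (L',p') ∈ so(n) × ℝⁿ satisfy L p = 0 and L' p' = 0. If there exists (r,d) ∈ E(n) with Ad*_{(r,d)}(L,p) = (L',p'), then there exists r' ∈ O(n) with L' = r' L r'⁻¹ and p' = r' p. (The intersection of a coadjoint orbit of E(n) with the Cartan subset Δ* = {(L,p) : Lp = 0} is a single O(n)-orbit.) -/

import Mathlib

open Matrix

abbrev Mat (n : ℕ) := Matrix (Fin n) (Fin n) ℝ
abbrev Vec (n : ℕ) := Fin n → ℝ

/-- `r` is an orthogonal matrix. -/
def IsOrth {n : ℕ} (r : Mat n) : Prop := r * rᵀ = 1 ∧ rᵀ * r = 1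

/-- `ω` is skew-symmetric. -/
def IsSkew {n : ℕ} (ω : Mat n) : Prop := ωᵀ = -ω

/-- Adjoint action of `(r,d) ∈ E(n)` on `(ω,v) ∈ so(n) × ℝⁿ`. -/
noncomputable def Ad {n : ℕ} (r : Mat n) (d : Vec n) (ω : Mat n) (v : Vec n) :
    Mat n × Vec n :=
  (r * ω * r⁻¹, r *ᵥ v - (r * ω * r⁻¹) *ᵥ d)

/-- The momentum map `μ(p,d) = ½(p dᵀ − d pᵀ)`. -/
noncomputable def mu {n : ℕ} (p d : Vec n) : Mat n :=
  (1/2 : ℝ) • (vecMulVec p d - vecMulVec d p)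

/-- Coadjoint action of `(r,d) ∈ E(n)` on `(L,p) ∈ so(n)* × (ℝⁿ)* ≃ so(n) × ℝⁿ`. -/
noncomputable def CoAd {n : ℕ} (r : Mat n) (d : Vec n) (L : Mat n) (p : Vec n) :
    Mat n × Vec n :=
  (r * L * r⁻¹ + mu (r *ᵥ p) d, r *ᵥ p)

lemma mu_mulVec {n : ℕ} (p d : Vec n) :
    mu p d *ᵥ p = (1/2 : ℝ) • ((d ⬝ᵥ p) • p - (p ⬝ᵥ p) • d) := by
  funext i
  simp only [mu, mulVec, dotProduct, vecMulVec_apply, Matrix.sub_apply, Matrix.smul_apply,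
    Pi.smul_apply, Pi.sub_apply, smul_eq_mul]
  rw [Finset.sum_mul, Finset.sum_mul, ← Finset.sum_sub_distrib, Finset.mul_sum]
  exact Finset.sum_congr rfl fun x _ => by ring

lemma mu_zero_of {n : ℕ} (p d : Vec n) (h : mu p d *ᵥ p = 0) : mu p d = 0 := by
  rw [mu_mulVec] at h
  have h2 : (d ⬝ᵥ p) • p = (p ⬝ᵥ p) • d := by
    have := congrArg (fun v => (2:ℝ) • v) h
    simpa [smul_smul, sub_eq_zero] using this
  by_cases hp : p = 0
  · subst hp
    funext i j
    simp [mu, vecMulVec_apply]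
  · have hpp : p ⬝ᵥ p ≠ 0 := by
      simpa [dotProduct_self_eq_zero] using hp
    have hd : d = ((d ⬝ᵥ p) / (p ⬝ᵥ p)) • p := by
      have := congrArg (fun v => (p ⬝ᵥ p)⁻¹ • v) h2
      simpa [smul_smul, inv_mul_cancel₀ hpp, div_eq_mul_inv, mul_comm] using this.symm
    rw [hd]
    funext i j
    simp [mu, vecMulVec_apply]


/-- The intersection of a coadjoint orbit of `E(n)` with `Δ*` is a single `O(n)`-orbit. -/
theorem stmt5 {n : ℕ} (L : Mat n) (hL : IsSkew L) (p : Vec n) (hLp : L *ᵥ p = 0)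
    (L' : Mat n) (hL' : IsSkew L') (p' : Vec n) (hL'p' : L' *ᵥ p' = 0)
    (r : Mat n) (hr : IsOrth r) (d : Vec n)
    (h : CoAd r d L p = (L', p')) :
    ∃ r' : Mat n, IsOrth r' ∧ L' = r' * L * r'⁻¹ ∧ p' = r' *ᵥ p := by
  have hinv : r⁻¹ = rᵀ := inv_eq_right_inv hr.1
  have h1 : r * L * r⁻¹ + mu (r *ᵥ p) d = L' := congrArg Prod.fst h
  have h2 : r *ᵥ p = p' := congrArg Prod.snd h
  have hrl : (r * L * r⁻¹) *ᵥ p' = 0 := by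
    rw [← h2, hinv, mulVec_mulVec, mul_assoc (r * L), hr.2, mul_one,
      ← mulVec_mulVec, hLp, mulVec_zero]
  have hmu0 : mu p' d *ᵥ p' = 0 := by
    have : (r * L * r⁻¹ + mu (r *ᵥ p) d) *ᵥ p' = 0 := by rw [h1]; exact hL'p'
    rw [add_mulVec, hrl, zero_add, h2] at this
    exact this
  have hmu : mu p' d = 0 := mu_zero_of _ _ hmu0
  refine ⟨r, hr, ?_, h2.symm⟩
  rw [← h1, h2, hmu, add_zero]
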